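/- Let G = (V,E) be a finite simple undirected graph, let η ≥ 0, and let f be an η-locally-stable fractional edge-load assignment on G with vertex loads ℓ_v and maximum load ρ̂ = max_{v∈V} ℓ_v. For each integer i ≥ 0 define T_i = { v ∈ V : ℓ_v ≥ ρ̂ − η·i }. Then for every integer k ≥ 0, |E(T_{k+1})| ≥ |T_k| · (ρ̂ − η·k); in particular, if T_{k+1} is nonempty then ρ_G(T_{k+1}) ≥ (|T_k|/|T_{k+1}|)·(ρ̂ − η·k). -/
import Mathlib


open Finset

/-- For an η-locally-stable fractional edge-load assignment with
maximum load `ρ̂` and level sets `T_i = {v : ℓ_v ≥ ρ̂ − η·i}`, for every `k ≥ 0` we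
have `|E(T_{k+1})| ≥ |T_k|·(ρ̂ − η·k)`; in particular, if `T_{k+1}` is nonempty then
`ρ_G(T_{k+1}) ≥ (|T_k|/|T_{k+1}|)·(ρ̂ − η·k)`. -/
theorem level_set_density_bound
    {V : Type*} [Fintype V] [DecidableEq V]
    (G : SimpleGraph V) [DecidableRel G.Adj]
    (η : ℝ) (hη : 0 ≤ η)
    (f : Sym2 V → V → ℝ)
    (hf_nonneg : ∀ u v : V, G.Adj u v → 0 ≤ f s(u, v) u)
    (hf_sum : ∀ u v : V, G.Adj u v → f s(u, v) u + f s(u, v) v = 1)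
    (ℓ : V → ℝ)
    (hℓ : ∀ v : V, ℓ v = ∑ e ∈ G.edgeFinset.filter (fun e => v ∈ e), f e v)
    (hstab : ∀ u v : V, G.Adj u v → 0 < f s(u, v) u → ℓ u ≤ ℓ v + η)
    (ρhat : ℝ)
    (hρhat_ub : ∀ v : V, ℓ v ≤ ρhat)
    (hρhat_mem : ∃ v : V, ℓ v = ρhat)
    (T : ℕ → Finset V)
    (hT : ∀ i : ℕ, T i = Finset.univ.filter (fun v => ρhat - η * i ≤ ℓ v)) :
    ∀ k : ℕ,
      ((T k).card : ℝ) * (ρhat - η * k) ≤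
        ((G.edgeFinset.filter (fun e => e ∈ (T (k + 1)).sym2)).card : ℝ) ∧
      ((T (k + 1)).Nonempty →
        ((T k).card : ℝ) / ((T (k + 1)).card : ℝ) * (ρhat - η * k) ≤
          ((G.edgeFinset.filter (fun e => e ∈ (T (k + 1)).sym2)).card : ℝ) /
            ((T (k + 1)).card : ℝ)) := by
  intro k
  set F : Finset (Sym2 V) := G.edgeFinset.filter (fun e => e ∈ (T (k + 1)).sym2) with hFdef
  have hmemT : ∀ i (v : V), v ∈ T i ↔ ρhat - η * i ≤ ℓ v := by
    intro i v; rw [hT i]; simp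
  -- key: vanishing outside F
  have hvanish : ∀ v ∈ T k, ∀ e ∈ G.edgeFinset, v ∈ e → e ∉ F → f e v = 0 := by
    intro v hv e he hve heF
    by_contra hne
    induction e with
    | h a b =>
      have hadj : G.Adj a b := by
        rwa [SimpleGraph.mem_edgeFinset, SimpleGraph.mem_edgeSet] at he
      -- wlog v = a
      rcases Sym2.mem_iff.mp hve with rfl | rfl
      · have hpos : 0 < f s(v, b) v := lt_of_le_of_ne (hf_nonneg v b hadj) (Ne.symm hne)
        have hub : ℓ v ≤ ℓ b + η := hstab v b hadj hpos
        apply heF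
        rw [hFdef, Finset.mem_filter]
        refine ⟨he, ?_⟩
        rw [Finset.mk_mem_sym2_iff]
        constructor
        · rw [hmemT]
          have := (hmemT k v).mp hv
          push_cast
          nlinarith
        · rw [hmemT]
          have := (hmemT k v).mp hv
          push_cast
          nlinarith
      · have hadj' : G.Adj v a := hadj.symm
        have hswap : s(a, v) = s(v, a) := Sym2.eq_swap
        rw [hswap] at hne
        have hpos : 0 < f s(v, a) v := lt_of_le_of_ne (hf_nonneg v a hadj') (Ne.symm hne)
        have hub : ℓ v ≤ ℓ a + η := hstab v a hadj' hpos
        apply heF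
        rw [hFdef, Finset.mem_filter]
        refine ⟨he, ?_⟩
        rw [Finset.mk_mem_sym2_iff]
        constructor
        · rw [hmemT]
          have := (hmemT k v).mp hv
          push_cast
          nlinarith
        · rw [hmemT]
          have := (hmemT k v).mp hv
          push_cast
          nlinarith
  -- ℓ v as a sum over F for v ∈ T k
  have hload : ∀ v ∈ T k, ℓ v = ∑ e ∈ F.filter (fun e => v ∈ e), f e v := by
    intro v hv
    rw [hℓ v]
    have hsub : F.filter (fun e => v ∈ e) ⊆ G.edgeFinset.filter (fun e => v ∈ e) := by
      intro e he
      simp only [hFdef, Finset.mem_filter] at he ⊢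
      exact ⟨he.1.1, he.2⟩
    refine (Finset.sum_subset hsub ?_).symm
    intro e he heF
    simp only [Finset.mem_filter] at he
    refine hvanish v hv e he.1 he.2 ?_
    intro hF
    exact heF (Finset.mem_filter.mpr ⟨hF, he.2⟩)
  have key : ((T k).card : ℝ) * (ρhat - η * k) ≤ (F.card : ℝ) := by
    have h1 : ((T k).card : ℝ) * (ρhat - η * k) ≤ ∑ v ∈ T k, ℓ v := by
      rw [Finset.card_eq_sum_ones, Nat.cast_sum, Finset.sum_mul]
      apply Finset.sum_le_sum
      intro v hv
      have := (hmemT k v).mp hv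
      simpa using this
    have h2 : ∑ v ∈ T k, ℓ v = ∑ e ∈ F, ∑ v ∈ (T k).filter (fun v => v ∈ e), f e v := by
      rw [Finset.sum_congr rfl hload]
      simp_rw [Finset.sum_filter]
      rw [Finset.sum_comm]
    have h3 : ∀ e ∈ F, ∑ v ∈ (T k).filter (fun v => v ∈ e), f e v ≤ 1 := by
      intro e heF
      have he : e ∈ G.edgeFinset := by
        rw [hFdef, Finset.mem_filter] at heF
        exact heF.1
      induction e with
      | h a b =>
        have hadj : G.Adj a b := by
          rwa [SimpleGraph.mem_edgeFinset, SimpleGraph.mem_edgeSet] at he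
        have hab : a ≠ b := hadj.ne
        have hsub : (T k).filter (fun v => v ∈ s(a, b)) ⊆ {a, b} := by
          intro v hv
          rcases Sym2.mem_iff.mp (Finset.mem_filter.mp hv).2 with rfl | rfl
          · exact Finset.mem_insert_self _ _
          · exact Finset.mem_insert_of_mem (Finset.mem_singleton_self _)
        calc ∑ v ∈ (T k).filter (fun v => v ∈ s(a, b)), f s(a, b) v
            ≤ ∑ v ∈ ({a, b} : Finset V), f s(a, b) v := by
              apply Finset.sum_le_sum_of_subset_of_nonneg hsub
              intro v hv _
              rcases Finset.mem_insert.mp hv with rfl | hv'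
              · exact hf_nonneg v b hadj
              · rw [Finset.mem_singleton] at hv'; subst hv'
                have := hf_nonneg v a hadj.symm
                rwa [Sym2.eq_swap] at this
          _ = f s(a, b) a + f s(a, b) b := Finset.sum_pair hab
          _ = 1 := hf_sum a b hadj
    calc ((T k).card : ℝ) * (ρhat - η * k) ≤ ∑ v ∈ T k, ℓ v := h1
      _ = ∑ e ∈ F, ∑ v ∈ (T k).filter (fun v => v ∈ e), f e v := h2
      _ ≤ ∑ e ∈ F, 1 := Finset.sum_le_sum h3
      _ = (F.card : ℝ) := by simp
  refine ⟨key, fun hne => ?_⟩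
  have hc : (0:ℝ) < ((T (k+1)).card : ℝ) := by exact_mod_cast hne.card_pos
  rw [div_mul_eq_mul_div]
  exact div_le_div_of_nonneg_right key hc.le
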